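/- For the Fleming-Viot generator L on the complete graph with K sites and killing rate p, applied to ψ_{k,l}(η) = η(k)η(l) with k ≠ l: Lψ_{k,l}(η) = −(2K(N−1+p))/(K(N−1)) · η(k)η(l) + ((N−1)/K)(η(k)+η(l)). -/
import Mathlib


/-- `move η i j` is the configuration `T_{i→j} η`. -/
def move {F : Type*} [DecidableEq F] (η : F → ℕ) (i j : F) : F → ℕ :=
  fun k => if i = j then η k else if k = i then η i - 1 else if k = j then η j + 1 else η k

/-- Fleming-Viot generator on the complete graph with `K` sites, `N` particles and
killing rate `p`. -/
noncomputable def cgGen (K N : ℕ) (p : ℝ) (f : (Fin K → ℕ) → ℝ) (η : Fin K → ℕ) : ℝ :=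
  ∑ i, (η i : ℝ) * ∑ j, (f (move η i j) - f η) *
      (1 / (K : ℝ) + p * (η j : ℝ) / ((N : ℝ) - 1))

/-- Action of the complete graph Fleming-Viot generator on `ψ_{k,l}(η) = η(k)η(l)`. -/
theorem stmt_7 (K N : ℕ) (hK : 1 ≤ K) (hN : 2 ≤ N) (p : ℝ) (hp : 0 < p)
    (k l : Fin K) (hkl : k ≠ l) (η : Fin K → ℕ) (hη : ∑ i, η i = N) :
    cgGen K N p (fun ξ => (ξ k : ℝ) * (ξ l : ℝ)) η =
      -(2 * K * ((N : ℝ) - 1 + p)) / (K * ((N : ℝ) - 1)) * ((η k : ℝ) * (η l : ℝ)) +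
        ((N : ℝ) - 1) / K * ((η k : ℝ) + (η l : ℝ)) := by
  classical
  have hK0 : (K : ℝ) ≠ 0 := by
    have : 0 < K := lt_of_lt_of_le Nat.zero_lt_one hK
    exact_mod_cast this.ne'
  have hN1 : ((N : ℝ) - 1) ≠ 0 := by
    have : (2 : ℝ) ≤ (N : ℝ) := by exact_mod_cast hN
    linarith
  set w : Fin K → ℝ := fun j => 1 / (K : ℝ) + p * (η j : ℝ) / ((N : ℝ) - 1) with hw
  set W : ℝ := ∑ j, w j with hWdef
  have hsum : ∑ i, (η i : ℝ) = (N : ℝ) := by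
    rw [← Nat.cast_sum, hη]
  have hW : W = 1 + p * (N : ℝ) / ((N : ℝ) - 1) := by
    rw [hWdef]
    have h1 : ∑ j : Fin K, (1 / (K : ℝ)) = 1 := by
      simp [Finset.sum_const, hK0]
    have h2 : ∑ j : Fin K, p * (η j : ℝ) / ((N : ℝ) - 1) = p * (N : ℝ) / ((N : ℝ) - 1) := by
      rw [← Finset.sum_div, ← Finset.mul_sum, hsum]
    calc ∑ j, w j = ∑ j : Fin K, (1 / (K : ℝ) + p * (η j : ℝ) / ((N : ℝ) - 1)) := rfl
      _ = (∑ j : Fin K, (1 / (K : ℝ))) + ∑ j : Fin K, p * (η j : ℝ) / ((N : ℝ) - 1) :=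
          Finset.sum_add_distrib
      _ = 1 + p * (N : ℝ) / ((N : ℝ) - 1) := by rw [h1, h2]
  -- indicator notation
  set δ : Fin K → Fin K → ℝ := fun a b => if a = b then 1 else 0 with hδ
  -- key pointwise identity
  have key : ∀ i j, (η i : ℝ) * ((move η i j k : ℝ) * (move η i j l : ℝ) - (η k : ℝ) * (η l : ℝ))
      = (η i : ℝ) * ((δ k j - δ k i) * (η l : ℝ) + (δ l j - δ l i) * (η k : ℝ)
          + (δ k j - δ k i) * (δ l j - δ l i)) := by
    intro i j
    by_cases hij : i = j
    · subst hij
      have hmv : move η i i = η := by funext m; simp [move]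
      rw [hmv]
      simp only [hδ]
      ring
    · rcases Nat.eq_zero_or_pos (η i) with h0 | h0
      · simp [h0]
      · have hm : ∀ m, (move η i j m : ℝ)
            = (η m : ℝ) + (if m = j then (1 : ℝ) else 0) - (if m = i then (1 : ℝ) else 0) := by
          intro m
          simp only [move, if_neg hij]
          split_ifs with h1 h2 h2
          · exact absurd (h1 ▸ h2) hij
          · subst h1
            rw [Nat.cast_sub h0]
            push_cast
            ring
          · subst h2
            push_cast
            ring
          · ring
        rw [hm k, hm l]
        simp only [hδ]
        ring
  -- step 1: cgGen as double sum with key applied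
  have step1 : cgGen K N p (fun ξ => (ξ k : ℝ) * (ξ l : ℝ)) η
      = ∑ i, ∑ j, ((η i : ℝ) * ((δ k j - δ k i) * (η l : ℝ) + (δ l j - δ l i) * (η k : ℝ)
          + (δ k j - δ k i) * (δ l j - δ l i))) * w j := by
    unfold cgGen
    refine Finset.sum_congr rfl fun i _ => ?_
    rw [Finset.mul_sum]
    refine Finset.sum_congr rfl fun j _ => ?_
    have hkey := key i j
    calc (η i : ℝ) * (((move η i j k : ℝ) * (move η i j l : ℝ) - (η k : ℝ) * (η l : ℝ))
            * (1 / (K : ℝ) + p * (η j : ℝ) / ((N : ℝ) - 1)))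
        = ((η i : ℝ) * ((move η i j k : ℝ) * (move η i j l : ℝ) - (η k : ℝ) * (η l : ℝ))) * w j := by
          rw [hw]; ring
      _ = _ := by rw [hkey]
  -- indicator sum facts (in j)
  have e1 : ∑ j, δ k j * w j = w k := by simp [hδ]
  have e2 : ∑ j, δ l j * w j = w l := by simp [hδ]
  have e3 : ∑ j, δ k j * δ l j * w j = 0 := by
    refine Finset.sum_eq_zero fun j _ => ?_
    simp only [hδ]
    by_cases h : k = j
    · subst h
      rw [if_neg (Ne.symm hkl)]
      ring
    · rw [if_neg h]; ring
  -- step 2: inner sum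
  have step2 : ∀ i, ∑ j, ((η i : ℝ) * ((δ k j - δ k i) * (η l : ℝ) + (δ l j - δ l i) * (η k : ℝ)
          + (δ k j - δ k i) * (δ l j - δ l i))) * w j
      = (η i : ℝ) * ((-(δ k i) * (η l : ℝ) - δ l i * (η k : ℝ) + δ k i * δ l i) * W
          + ((η l : ℝ) - δ l i) * w k + ((η k : ℝ) - δ k i) * w l) := by
    intro i
    have expand : ∀ j, ((η i : ℝ) * ((δ k j - δ k i) * (η l : ℝ) + (δ l j - δ l i) * (η k : ℝ)
            + (δ k j - δ k i) * (δ l j - δ l i))) * w j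
        = ((η i : ℝ) * (-(δ k i) * (η l : ℝ) - δ l i * (η k : ℝ) + δ k i * δ l i)) * w j
          + ((η i : ℝ) * ((η l : ℝ) - δ l i)) * (δ k j * w j)
          + ((η i : ℝ) * ((η k : ℝ) - δ k i)) * (δ l j * w j)
          + (η i : ℝ) * (δ k j * δ l j * w j) := by
      intro j; ring
    rw [Finset.sum_congr rfl fun j _ => expand j]
    rw [Finset.sum_add_distrib, Finset.sum_add_distrib, Finset.sum_add_distrib,
      ← Finset.mul_sum, ← Finset.mul_sum, ← Finset.mul_sum, ← Finset.mul_sum,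
      e1, e2, e3, ← hWdef]
    ring
  -- indicator sum facts (in i)
  have f1 : ∑ i, δ k i * (η i : ℝ) = (η k : ℝ) := by simp [hδ]
  have f2 : ∑ i, δ l i * (η i : ℝ) = (η l : ℝ) := by simp [hδ]
  have f3 : ∑ i, δ k i * δ l i * (η i : ℝ) = 0 := by
    refine Finset.sum_eq_zero fun i _ => ?_
    simp only [hδ]
    by_cases h : k = i
    · subst h
      rw [if_neg (Ne.symm hkl)]
      ring
    · rw [if_neg h]; ring
  -- step 3: outer sum
  have step3 : ∑ i, (η i : ℝ) * ((-(δ k i) * (η l : ℝ) - δ l i * (η k : ℝ) + δ k i * δ l i) * W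
          + ((η l : ℝ) - δ l i) * w k + ((η k : ℝ) - δ k i) * w l)
      = ((N : ℝ) - 1) * ((η l : ℝ) * w k + (η k : ℝ) * w l)
        - 2 * W * ((η k : ℝ) * (η l : ℝ)) := by
    have expand : ∀ i, (η i : ℝ) * ((-(δ k i) * (η l : ℝ) - δ l i * (η k : ℝ) + δ k i * δ l i) * W
          + ((η l : ℝ) - δ l i) * w k + ((η k : ℝ) - δ k i) * w l)
        = ((η l : ℝ) * w k + (η k : ℝ) * w l) * (η i : ℝ)
          + (-(η l : ℝ) * W - w l) * (δ k i * (η i : ℝ))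
          + (-(η k : ℝ) * W - w k) * (δ l i * (η i : ℝ))
          + W * (δ k i * δ l i * (η i : ℝ)) := by
      intro i; ring
    rw [Finset.sum_congr rfl fun i _ => expand i]
    rw [Finset.sum_add_distrib, Finset.sum_add_distrib, Finset.sum_add_distrib,
      ← Finset.mul_sum, ← Finset.mul_sum, ← Finset.mul_sum, ← Finset.mul_sum,
      f1, f2, f3, hsum]
    ring
  rw [step1, Finset.sum_congr rfl fun i _ => step2 i, step3]
  have hwk : w k = 1 / (K : ℝ) + p * (η k : ℝ) / ((N : ℝ) - 1) := rfl
  have hwl : w l = 1 / (K : ℝ) + p * (η l : ℝ) / ((N : ℝ) - 1) := rfl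
  rw [hwk, hwl, hW]
  field_simp
  ring
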